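/- For a positive integer k, the function H_k(p) := (1-1/p)^{2k²+k} · (1/(p+1)) · (1 + (p/2)·((1+1/√p)^{-2k} + (1-1/√p)^{-2k})) satisfies H_k(p) = 1 + O(1/p²) as p → ∞, and consequently the Euler product ∏_p H_k(p) over all primes converges absolutely. -/

import Mathlib

set_option maxHeartbeats 1000000

/-- The local Euler factor appearing in the arithmetic constant `a_k^S(𝒯)`. -/
noncomputable def Hfactor (k : ℕ) (p : ℝ) : ℝ :=
  (1 - 1 / p) ^ (2 * k ^ 2 + k) * (1 / (p + 1)) *
    (1 + (p / 2) * (((1 + 1 / Real.sqrt p) ^ (2 * k))⁻¹ + ((1 - 1 / Real.sqrt p) ^ (2 * k))⁻¹))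

open Polynomial Finset

/-- The even part of the binomial expansion, as a polynomial in `q = x²`. -/
noncomputable def Spoly (k : ℕ) : Polynomial ℝ :=
  ∑ i ∈ Finset.range (2 * k + 1),
    if Even i then (((2 * k).choose i : ℝ)) • (X ^ (i / 2)) else 0

noncomputable def Npoly (k : ℕ) : Polynomial ℝ :=
  X * (1 - X) ^ (2 * k ^ 2 + k) + (1 - X) ^ (2 * k ^ 2 - k) * Spoly k

lemma Spoly_eval (k : ℕ) (q : ℝ) :
    (Spoly k).eval q
      = ∑ i ∈ Finset.range (2 * k + 1),
          (if Even i then ((2 * k).choose i : ℝ) * q ^ (i / 2) else 0) := by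
  simp [Spoly, eval_finset_sum, apply_ite (eval q)]

lemma binom_even (n : ℕ) (x : ℝ) :
    (1 + x) ^ n + (1 - x) ^ n
      = ∑ i ∈ Finset.range (n + 1),
          (if Even i then 2 * (n.choose i : ℝ) * x ^ i else 0) := by
  have h1 : (1 + x) ^ n = ∑ i ∈ Finset.range (n + 1), x ^ i * (n.choose i : ℝ) := by
    rw [add_comm]
    simpa using add_pow x 1 n
  have h2 : (1 - x) ^ n = ∑ i ∈ Finset.range (n + 1), (-x) ^ i * (n.choose i : ℝ) := by
    have : (1 : ℝ) - x = -x + 1 := by ring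
    rw [this]
    simpa using add_pow (-x) 1 n
  rw [h1, h2, ← Finset.sum_add_distrib]
  refine Finset.sum_congr rfl fun i _ => ?_
  rcases Nat.even_or_odd i with h | h
  · rw [h.neg_pow, if_pos h]; ring
  · rw [h.neg_pow, if_neg (Nat.not_even_iff_odd.mpr h)]; ring

lemma sum_pow_sqrt (k : ℕ) (q : ℝ) (hq : 0 ≤ q) :
    (1 + Real.sqrt q) ^ (2 * k) + (1 - Real.sqrt q) ^ (2 * k)
      = 2 * (Spoly k).eval q := by
  rw [binom_even, Spoly_eval, Finset.mul_sum]
  refine Finset.sum_congr rfl fun i _ => ?_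
  rcases Nat.even_or_odd i with h | h
  · obtain ⟨j, hj⟩ := h
    have hx : Real.sqrt q ^ i = q ^ (i / 2) := by
      have h2 : i = 2 * (i / 2) := by omega
      conv_lhs => rw [h2]
      rw [pow_mul, Real.sq_sqrt hq]
    rw [if_pos ⟨j, hj⟩, if_pos ⟨j, hj⟩, hx]; ring
  · rw [if_neg (Nat.not_even_iff_odd.mpr h), if_neg (Nat.not_even_iff_odd.mpr h)]; ring

lemma Spoly_eval_zero (k : ℕ) (hk : 1 ≤ k) : (Spoly k).eval 0 = 1 := by
  rw [Spoly_eval, Finset.sum_eq_single 0]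
  · simp
  · intro i hi hne
    rcases Nat.even_or_odd i with h | h
    · obtain ⟨j, hj⟩ := h
      have : i / 2 ≠ 0 := by omega
      rw [if_pos ⟨j, hj⟩, zero_pow this, mul_zero]
    · rw [if_neg (Nat.not_even_iff_odd.mpr h)]
  · intro h
    exact absurd (Finset.mem_range.mpr (by omega)) h

lemma Spoly_derivative_eval_zero (k : ℕ) (hk : 1 ≤ k) :
    (Spoly k).derivative.eval 0 = (k : ℝ) * (2 * k - 1) := by
  have hrw : (Spoly k).derivative.eval 0
      = ∑ i ∈ Finset.range (2 * k + 1),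
          (if Even i then ((2 * k).choose i : ℝ) * (((i / 2 : ℕ) : ℝ) * (0:ℝ) ^ (i / 2 - 1))
           else 0) := by
    rw [Spoly, derivative_sum, eval_finset_sum]
    refine Finset.sum_congr rfl fun i _ => ?_
    split_ifs with h
    · rw [derivative_smul, derivative_X_pow, eval_smul, smul_eq_mul]
      simp
    · simp
  rw [hrw, Finset.sum_eq_single 2]
  · have h2 : Even 2 := even_two
    rw [if_pos h2]
    have hch : ((2 * k).choose 2 : ℝ) = (k : ℝ) * (2 * k - 1) := by
      have h1 : (2 * k).choose 2 = k * (2 * k - 1) := by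
        rw [Nat.choose_two_right]
        have : 2 * k * (2 * k - 1) = 2 * (k * (2 * k - 1)) := by ring
        rw [this, Nat.mul_div_cancel_left _ (by norm_num)]
      rw [h1]
      push_cast [Nat.cast_sub (by omega : 1 ≤ 2 * k)]
      ring
    norm_num [hch]
  · intro i hi hne
    rcases Nat.even_or_odd i with h | h
    · obtain ⟨j, hj⟩ := h
      rcases Nat.lt_or_ge i 2 with hlt | hge
      · have : i = 0 := by omega
        subst this
        simp
      · have hd : i / 2 - 1 ≠ 0 := by omega
        rw [if_pos ⟨j, hj⟩, zero_pow hd, mul_zero, mul_zero]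
    · rw [if_neg (Nat.not_even_iff_odd.mpr h)]
  · intro h
    exact absurd (Finset.mem_range.mpr (by omega)) h

lemma Npoly_eval_zero (k : ℕ) (hk : 1 ≤ k) : (Npoly k).eval 0 = 1 := by
  simp [Npoly, Spoly_eval_zero k hk]

lemma Npoly_derivative_eval_zero (k : ℕ) (hk : 1 ≤ k) :
    (Npoly k).derivative.eval 0 = 1 := by
  have hk' : (1 : ℝ) ≤ (k : ℝ) := by exact_mod_cast hk
  have hkn : k ≤ 2 * k ^ 2 := by nlinarith
  have hsub : ((2 * k ^ 2 - k : ℕ) : ℝ) = 2 * (k : ℝ) ^ 2 - (k : ℝ) := by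
    push_cast [Nat.cast_sub hkn]
    ring
  rw [Npoly]
  rw [derivative_add, derivative_mul, derivative_mul, derivative_X, derivative_pow,
    derivative_pow]
  have hone : derivative (1 - X : Polynomial ℝ) = -1 := by simp
  rw [hone]
  simp only [eval_add, eval_mul, eval_pow, eval_sub, eval_X, eval_one, eval_natCast,
    eval_neg, eval_C, one_mul, sub_zero, mul_zero, zero_mul, add_zero, zero_add, mul_one,
    mul_neg, one_pow]
  rw [Spoly_eval_zero k hk, Spoly_derivative_eval_zero k hk, hsub]
  ring

lemma Npoly_sub_dvd (k : ℕ) (hk : 1 ≤ k) :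
    ∃ Q : Polynomial ℝ, ∀ q : ℝ, (Npoly k).eval q - (1 + q) = q ^ 2 * Q.eval q := by
  have hdvd : (X : Polynomial ℝ) ^ 2 ∣ (Npoly k - (1 + X)) := by
    rw [X_pow_dvd_iff]
    intro d hd
    interval_cases d
    · rw [coeff_sub]
      have h1 : (Npoly k).coeff 0 = 1 := by
        rw [Polynomial.coeff_zero_eq_eval_zero]
        exact Npoly_eval_zero k hk
      rw [h1]
      simp
    · rw [coeff_sub]
      have h1 : (Npoly k).coeff 1 = 1 := by
        have h2 := Polynomial.coeff_derivative (Npoly k) 0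
        rw [Polynomial.coeff_zero_eq_eval_zero, Npoly_derivative_eval_zero k hk] at h2
        push_cast at h2
        linarith
      rw [h1]
      simp [Polynomial.coeff_one]
  obtain ⟨Q, hQ⟩ := hdvd
  refine ⟨Q, fun q => ?_⟩
  have := congrArg (eval q) hQ
  simpa using this

lemma Hfactor_eq (k : ℕ) (hk : 1 ≤ k) (p : ℝ) (hp : 2 ≤ p) :
    Hfactor k p = (Npoly k).eval (1 / p) / (1 + 1 / p) := by
  have hp0 : 0 < p := by linarith
  have hq0 : (0 : ℝ) < 1 / p := by positivity
  have hs1 : 1 < Real.sqrt p := by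
    rw [show (1 : ℝ) = Real.sqrt 1 by simp]
    exact Real.sqrt_lt_sqrt (by norm_num) (by linarith)
  have hs0 : 0 < Real.sqrt p := by linarith
  have hs2 : Real.sqrt p ^ 2 = p := Real.sq_sqrt (le_of_lt hp0)
  have hinv : 1 / Real.sqrt p < 1 := by
    rw [div_lt_one hs0]; exact hs1
  have ha : (0 : ℝ) < 1 + 1 / Real.sqrt p := by positivity
  have hb : (0 : ℝ) < 1 - 1 / Real.sqrt p := by linarith
  have hsq : (1 / Real.sqrt p) = Real.sqrt (1 / p) := by
    rw [one_div, one_div, Real.sqrt_inv]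
  have hab : (1 + 1 / Real.sqrt p) * (1 - 1 / Real.sqrt p) = 1 - 1 / p := by
    have h1 : (1 + 1 / Real.sqrt p) * (1 - 1 / Real.sqrt p) = 1 - (1 / Real.sqrt p) ^ 2 := by
      ring
    rw [h1, div_pow, one_pow, hs2]
  have hq1 : (0 : ℝ) < 1 - 1 / p := by
    have : 1 / p ≤ 1 / 2 := by
      apply one_div_le_one_div_of_le <;> linarith
    linarith
  have hkey : ((1 + 1 / Real.sqrt p) ^ (2 * k))⁻¹ + ((1 - 1 / Real.sqrt p) ^ (2 * k))⁻¹
      = 2 * (Spoly k).eval (1 / p) / (1 - 1 / p) ^ (2 * k) := by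
    have hA : (1 + 1 / Real.sqrt p) ^ (2 * k) ≠ 0 := by positivity
    have hB : (1 - 1 / Real.sqrt p) ^ (2 * k) ≠ 0 := by positivity
    have hsum : (1 + 1 / Real.sqrt p) ^ (2 * k) + (1 - 1 / Real.sqrt p) ^ (2 * k)
        = 2 * (Spoly k).eval (1 / p) := by
      rw [hsq]
      exact sum_pow_sqrt k (1 / p) (le_of_lt hq0)
    have hprod : (1 + 1 / Real.sqrt p) ^ (2 * k) * (1 - 1 / Real.sqrt p) ^ (2 * k)
        = (1 - 1 / p) ^ (2 * k) := by
      rw [← mul_pow, hab]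
    rw [inv_add_inv hA hB, hprod, hsum]
  have hkn : k ≤ 2 * k ^ 2 := by nlinarith
  have hm : 2 * k ^ 2 + k = (2 * k ^ 2 - k) + 2 * k := by zify [hkn]; ring
  have hpow : (1 - 1 / p) ^ (2 * k ^ 2 + k)
      = (1 - 1 / p) ^ (2 * k ^ 2 - k) * (1 - 1 / p) ^ (2 * k) := by
    rw [hm, pow_add]
  have hNeval : (Npoly k).eval (1 / p)
      = (1 / p) * (1 - 1 / p) ^ (2 * k ^ 2 + k)
        + (1 - 1 / p) ^ (2 * k ^ 2 - k) * (Spoly k).eval (1 / p) := by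
    simp [Npoly]
  rw [Hfactor, hkey, hNeval, hpow]
  have hB0 : (1 - 1 / p) ^ (2 * k) ≠ 0 := by positivity
  have hp1 : p + 1 ≠ 0 := by linarith
  have hq2 : 1 + 1 / p ≠ 0 := by positivity
  set S := (Spoly k).eval (1 / p) with hS
  set A := (1 - 1 / p) ^ (2 * k ^ 2 - k) with hA
  set B := (1 - 1 / p) ^ (2 * k) with hBdef
  field_simp

lemma Hfactor_pos (k : ℕ) (p : ℝ) (hp : 2 ≤ p) : 0 < Hfactor k p := by
  have hp0 : 0 < p := by linarith
  have hs1 : 1 < Real.sqrt p := by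
    rw [show (1 : ℝ) = Real.sqrt 1 by simp]
    exact Real.sqrt_lt_sqrt (by norm_num) (by linarith)
  have hs0 : 0 < Real.sqrt p := by linarith
  have hinv : 1 / Real.sqrt p < 1 := by rw [div_lt_one hs0]; exact hs1
  have hb : (0 : ℝ) < 1 - 1 / Real.sqrt p := by linarith
  have ha : (0 : ℝ) < 1 + 1 / Real.sqrt p := by positivity
  have hq1 : (0 : ℝ) < 1 - 1 / p := by
    have : 1 / p ≤ 1 / 2 := by apply one_div_le_one_div_of_le <;> linarith
    linarith
  have h1 : (0 : ℝ) < (1 - 1 / p) ^ (2 * k ^ 2 + k) := by positivity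
  have h2 : (0 : ℝ) < 1 / (p + 1) := by positivity
  have h3 : (0 : ℝ) < 1 + (p / 2) * (((1 + 1 / Real.sqrt p) ^ (2 * k))⁻¹
      + ((1 - 1 / Real.sqrt p) ^ (2 * k))⁻¹) := by positivity
  exact mul_pos (mul_pos h1 h2) h3

lemma abs_log_le_two_mul (x : ℝ) (h : |x - 1| ≤ 1 / 2) : |Real.log x| ≤ 2 * |x - 1| := by
  have hx2 : 1 / 2 ≤ x := by
    rcases abs_le.mp h with ⟨h1, h2⟩; linarith
  have hx0 : 0 < x := by linarith
  have h1 : Real.log x ≤ x - 1 := Real.log_le_sub_one_of_pos hx0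
  have h2 : 1 - x⁻¹ ≤ Real.log x := by
    have := Real.log_le_sub_one_of_pos (inv_pos.mpr hx0)
    rw [Real.log_inv] at this
    linarith
  rw [abs_le]
  constructor
  · rcases le_total 1 x with hc | hc
    · rw [abs_of_nonneg (by linarith)]
      have hxi : x⁻¹ ≤ 1 := by
        rw [inv_le_one_iff₀]; right; exact hc
      linarith
    · rw [abs_of_nonpos (by linarith)]
      have hge : 1 - x⁻¹ ≥ -2 * (1 - x) := by
        rw [ge_iff_le, ← sub_nonneg]
        have hkey : (1 - x⁻¹) - (-2 * (1 - x)) = (1 - x) * (2 * x - 1) / x := by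
          field_simp
          ring
        rw [hkey]
        apply div_nonneg _ (le_of_lt hx0)
        nlinarith
      linarith
  · calc Real.log x ≤ x - 1 := h1
      _ ≤ |x - 1| := le_abs_self _
      _ ≤ 2 * |x - 1| := by nlinarith [abs_nonneg (x - 1)]

theorem Hfactor_one_add_O_and_multipliable (k : ℕ) (hk : 1 ≤ k) :
    (∃ C : ℝ, 0 < C ∧ ∀ p : ℕ, p.Prime → |Hfactor k p - 1| ≤ C / (p : ℝ) ^ 2)
    ∧ Summable (fun p : Nat.Primes => |Hfactor k p - 1|)
    ∧ Multipliable (fun p : Nat.Primes => Hfactor k p) := by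
  obtain ⟨Q, hQ⟩ := Npoly_sub_dvd k hk
  obtain ⟨x₀, hx₀, hx₀max⟩ := (isCompact_Icc (a := (0:ℝ)) (b := 1)).exists_isMaxOn
    (Set.nonempty_Icc.mpr (by norm_num))
    ((continuous_abs.comp (Polynomial.continuous Q)).continuousOn)
  set C : ℝ := |Q.eval x₀| + 1 with hC
  have hCpos : 0 < C := by positivity
  have hbound : ∀ p : ℕ, p.Prime → |Hfactor k p - 1| ≤ C / (p : ℝ) ^ 2 := by
    intro p hp
    have hp2 : (2 : ℝ) ≤ p := by exact_mod_cast hp.two_le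
    have hp0 : (0 : ℝ) < p := by linarith
    have hqmem : 1 / (p : ℝ) ∈ Set.Icc (0 : ℝ) 1 := by
      constructor
      · positivity
      · rw [div_le_one hp0]; linarith
    have hHq := Hfactor_eq k hk p hp2
    have hden : (0 : ℝ) < 1 + 1 / (p : ℝ) := by positivity
    have key : Hfactor k p - 1
        = (1 / (p : ℝ)) ^ 2 * Q.eval (1 / (p : ℝ)) / (1 + 1 / (p : ℝ)) := by
      rw [hHq, div_sub' (ne_of_gt hden), mul_one, hQ (1 / (p : ℝ))]
    rw [key, abs_div, abs_of_pos hden, abs_mul, abs_pow,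
      abs_of_pos (by positivity : (0:ℝ) < 1 / (p:ℝ))]
    have h1 : |Q.eval (1 / (p : ℝ))| ≤ C := by
      have h2 := hx₀max hqmem
      simp only [Function.comp] at h2
      rw [hC]
      have h3 : |Q.eval (1 / (p : ℝ))| ≤ |Q.eval x₀| := h2
      linarith
    calc (1 / (p : ℝ)) ^ 2 * |Q.eval (1 / (p : ℝ))| / (1 + 1 / (p : ℝ))
        ≤ (1 / (p : ℝ)) ^ 2 * |Q.eval (1 / (p : ℝ))| / 1 := by
          have h0 : (0:ℝ) ≤ 1 / (p:ℝ) := by positivity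
          apply div_le_div_of_nonneg_left _ (by norm_num) (by linarith)
          positivity
      _ = (1 / (p : ℝ)) ^ 2 * |Q.eval (1 / (p : ℝ))| := by rw [div_one]
      _ ≤ (1 / (p : ℝ)) ^ 2 * C := by
          apply mul_le_mul_of_nonneg_left h1 (by positivity)
      _ = C / (p : ℝ) ^ 2 := by field_simp
  have hmaj : Summable (fun p : Nat.Primes => C / ((p : ℕ) : ℝ) ^ 2) := by
    have h0 : Summable (fun n : ℕ => C * (1 / (n : ℝ) ^ 2)) :=
      Summable.mul_left C (Real.summable_one_div_nat_pow.mpr one_lt_two)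
    have h1 : Summable (fun p : Nat.Primes => C * (1 / ((p : ℕ) : ℝ) ^ 2)) :=
      h0.comp_injective (Nat.Primes.coe_nat_injective)
    simpa [Function.comp, mul_one_div, div_eq_mul_inv] using h1
  have hsummable : Summable (fun p : Nat.Primes => |Hfactor k p - 1|) := by
    apply Summable.of_nonneg_of_le (fun p => abs_nonneg _) _ hmaj
    intro p
    exact hbound p p.prop
  refine ⟨⟨C, hCpos, hbound⟩, hsummable, ?_⟩
  have hpos : ∀ p : Nat.Primes, 0 < Hfactor k p := by
    intro p
    exact Hfactor_pos k p (by exact_mod_cast p.prop.two_le)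
  have hlog : Summable (fun p : Nat.Primes => Real.log (Hfactor k p)) := by
    apply Summable.of_norm_bounded_eventually (g := fun p : Nat.Primes => 2 * (C / ((p:ℕ):ℝ) ^ 2))
      (hmaj.mul_left 2)
    rw [Filter.eventually_cofinite]
    have hfin : {p : Nat.Primes | ((p : ℕ) : ℝ) ^ 2 < 2 * C}.Finite := by
      have hsub : {p : Nat.Primes | ((p : ℕ) : ℝ) ^ 2 < 2 * C}
          ⊆ (fun p : Nat.Primes => (p : ℕ)) ⁻¹' (Set.Iic (Nat.ceil (2 * C))) := by
        intro p hp
        simp only [Set.mem_setOf_eq] at hp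
        simp only [Set.mem_preimage, Set.mem_Iic]
        have hone : (1 : ℝ) ≤ ((p : ℕ) : ℝ) := by exact_mod_cast p.prop.one_lt.le
        have h1 : ((p : ℕ) : ℝ) ≤ ((p : ℕ) : ℝ) ^ 2 := by nlinarith
        have h2 : ((p : ℕ) : ℝ) ≤ 2 * C := by linarith
        have h3 : ((p : ℕ) : ℝ) ≤ (Nat.ceil (2 * C) : ℝ) := le_trans h2 (Nat.le_ceil (2 * C))
        exact_mod_cast h3
      exact Set.Finite.subset ((Set.finite_Iic _).preimage
        (Set.injOn_of_injective Nat.Primes.coe_nat_injective)) hsub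
    apply Set.Finite.subset hfin
    intro p hp
    simp only [Set.mem_setOf_eq] at hp ⊢
    by_contra hcon
    push_neg at hcon
    apply hp
    have hC2 : C / ((p:ℕ):ℝ) ^ 2 ≤ 1 / 2 := by
      have hpn : (0:ℝ) < ((p:ℕ):ℝ) := by exact_mod_cast p.prop.pos
      rw [div_le_div_iff₀ (by positivity) (by norm_num)]
      linarith
    have hHb : |Hfactor k p - 1| ≤ 1 / 2 := le_trans (hbound p p.prop) hC2
    have hl := abs_log_le_two_mul (Hfactor k p) hHb
    calc ‖Real.log (Hfactor k p)‖ = |Real.log (Hfactor k p)| := rfl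
      _ ≤ 2 * |Hfactor k p - 1| := hl
      _ ≤ 2 * (C / ((p:ℕ):ℝ) ^ 2) := by
          apply mul_le_mul_of_nonneg_left (hbound p p.prop) (by norm_num)
  exact Real.multipliable_of_summable_log hpos hlog
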